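/- Let P = conv(u_0, u_1, u_2, u_3, u_4) ⊆ ℝ^4 be the lattice simplex with vertices u_0 = (5,0,0,0), u_1 = (0,60,0,0), u_2 = (0,0,0,0), u_3 = (8,24,12,0), u_4 = (33,24,72,60). Then none of the 3-dilations P_{i,3} admits a nontrivial translation inside P: for every 0 ≤ i ≤ 4 and every nonzero tuple t_i = (t_{ij})_{j≠i} of nonnegative integers, the translated dilation P_{i,3,t_i} is not contained in P. -/

import Mathlib

open Finset Pointwise

noncomputable section

/-- The real point corresponding to a lattice point. -/
def toR {n : ℕ} (v : Fin n → ℤ) : Fin n → ℝ := fun x => (v x : ℝ)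

/-- The lattice simplex (as a subset of `ℝ^n`) with the given lattice vertices. -/
def lsimplex {n m : ℕ} (u : Fin m → Fin n → ℤ) : Set (Fin n → ℝ) :=
  convexHull ℝ (Set.range fun i => toR (u i))

/-- The lattice length `l_{ij}` of the edge `u_i u_j`:
the gcd of the coordinates of `u_j - u_i`. -/
def latLen {n m : ℕ} (u : Fin m → Fin n → ℤ) (i j : Fin m) : ℕ :=
  Finset.univ.gcd fun x => (u j x - u i x).natAbs

/-- `r_{ij,k}`: the least nonnegative residue of `l_{ij}` modulo `k`. -/
def rmod {n m : ℕ} (u : Fin m → Fin n → ℤ) (i j : Fin m) (k : ℕ) : ℕ :=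
  latLen u i j % k

/-- The vertices of the `k`-dilation `P_{i,k}`: the vertex `u_i` together with, for `j ≠ i`,
the points `((l_{ij} - r_{ij,k})/l_{ij})·u_j + (r_{ij,k}/l_{ij})·u_i`. -/
def dilVert {n m : ℕ} (u : Fin m → Fin n → ℤ) (i : Fin m) (k : ℕ) (j : Fin m) :
    Fin n → ℝ :=
  if j = i then toR (u i)
  else
    ((((latLen u i j : ℝ) - (rmod u i j k : ℝ)) / (latLen u i j : ℝ)) • toR (u j))
      + (((rmod u i j k : ℝ) / (latLen u i j : ℝ)) • toR (u i))

/-- The `k`-dilation `P_{i,k}`. -/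
def dil {n m : ℕ} (u : Fin m → Fin n → ℤ) (i : Fin m) (k : ℕ) : Set (Fin n → ℝ) :=
  convexHull ℝ (Set.range (dilVert u i k))

/-- The primitive edge vector `ũ_{ij} = (u_j - u_i)/l_{ij}`. -/
def primVec {n m : ℕ} (u : Fin m → Fin n → ℤ) (i j : Fin m) : Fin n → ℝ :=
  (latLen u i j : ℝ)⁻¹ • (toR (u j) - toR (u i))

/-- The translated `k`-dilation `P_{i,k,t} = P_{i,k} + Σ_{j ≠ i} t_j ũ_{ij}`. -/
def dilT {n m : ℕ} (u : Fin m → Fin n → ℤ) (i : Fin m) (k : ℕ) (t : Fin m → ℕ) :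
    Set (Fin n → ℝ) :=
  (fun y => y + ∑ j ∈ Finset.univ.erase i, (t j : ℝ) • primVec u i j) '' dil u i k

/-- The vertices of the simplex of Example 5.1. -/
def uEx : Fin 5 → Fin 4 → ℤ :=
  ![![5, 0, 0, 0], ![0, 60, 0, 0], ![0, 0, 0, 0], ![8, 24, 12, 0], ![33, 24, 72, 60]]


/-- A halfspace containing all vertices of `uEx` contains the whole simplex. -/
lemma halfspace (a : Fin 4 → ℝ) (b : ℝ)
    (h : ∀ s : Fin 5, 0 ≤ b + ∑ x, a x * toR (uEx s) x) :
    ∀ p ∈ lsimplex uEx, 0 ≤ b + ∑ x, a x * p x := by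
  intro p hp
  have hlin : IsLinearMap ℝ (fun q : Fin 4 → ℝ => ∑ x, a x * q x) := by
    constructor
    · intro q r; simp [mul_add, Finset.sum_add_distrib]
    · intro c q
      simp only [Pi.smul_apply, smul_eq_mul, Finset.mul_sum]
      exact Finset.sum_congr rfl fun x _ => by ring
  have hc : Convex ℝ {q : Fin 4 → ℝ | -b ≤ ∑ x, a x * q x} := convex_halfSpace_ge hlin (-b)
  have hsub : lsimplex uEx ⊆ {q : Fin 4 → ℝ | -b ≤ ∑ x, a x * q x} := by
    apply convexHull_min ?_ hc
    rintro _ ⟨s, rfl⟩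
    have := h s
    simp only [Set.mem_setOf_eq]
    linarith
  have := hsub hp
  simp only [Set.mem_setOf_eq] at this
  linarith

/-- If `l_{ij} ≡ 0 (mod 3)`, the translated vertex `u_j + Σ t_m ũ_{im}` lies in `P_{i,3,t}`. -/
lemma mem_dilT (i j : Fin 5) (t : Fin 5 → ℕ) (hj : j ≠ i) (hr : rmod uEx i j 3 = 0)
    (hl : latLen uEx i j ≠ 0) :
    toR (uEx j) + ∑ m ∈ Finset.univ.erase i, (t m : ℝ) • primVec uEx i m
      ∈ dilT uEx i 3 t := by
  refine ⟨toR (uEx j), subset_convexHull ℝ _ ⟨j, ?_⟩, rfl⟩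
  have hne : (latLen uEx i j : ℝ) ≠ 0 := Nat.cast_ne_zero.mpr hl
  unfold dilVert
  rw [if_neg hj, hr]
  push_cast
  rw [sub_zero, div_self hne, zero_div, one_smul, zero_smul, add_zero]

/-- The sum over `univ.erase i` equals the sum over `univ` since `primVec uEx i i = 0`. -/
lemma shift_eq (i : Fin 5) (t : Fin 5 → ℕ) :
    ∑ m ∈ Finset.univ.erase i, (t m : ℝ) • primVec uEx i m
      = ∑ m, (t m : ℝ) • primVec uEx i m := by
  apply Finset.sum_erase
  simp [primVec, sub_self]

/-- for the simplex of Example 5.1, no `P_{i,3}` admits a nontrivial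
translation inside `P`: for every `i` and every tuple `t` of nonnegative integers
with `t_j ≠ 0` for some `j ≠ i`, the translated dilation `P_{i,3,t}` is not contained in `P`. -/
theorem example_no_nontrivial_translation :
    ∀ i : Fin 5, ∀ t : Fin 5 → ℕ, (∃ j, j ≠ i ∧ t j ≠ 0) →
      ¬ dilT uEx i 3 t ⊆ lsimplex uEx := by
  intro i t hyp hsub
  obtain ⟨j, hj, htj⟩ := hyp
  fin_cases i
  · -- i = 0
    have key := halfspace ![12, 0, -8, 3] 0 (by
      intro s; fin_cases s <;> norm_num [toR, uEx, Fin.sum_univ_four, Matrix.cons_val_two, Matrix.cons_val_three, Matrix.vecHead,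
        Matrix.vecTail])
    have hw := mem_dilT 0 3 t (by decide) (by decide) (by decide)
    have hP := key _ (hsub hw)
    rw [shift_eq] at hP
    have l0 : latLen uEx 0 0 = 0 := by decide
    have l1 : latLen uEx 0 1 = 5 := by decide
    have l2 : latLen uEx 0 2 = 5 := by decide
    have l3 : latLen uEx 0 3 = 3 := by decide
    have l4 : latLen uEx 0 4 = 4 := by decide
    simp only [Fin.sum_univ_five, primVec] at hP
    rw [l0, l1, l2, l3, l4] at hP
    simp only [Fin.sum_univ_four, toR, uEx, Pi.add_apply, Pi.smul_apply, Pi.sub_apply,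
      smul_eq_mul] at hP
    norm_num [Matrix.vecHead, Matrix.vecTail, Matrix.cons_val_two, Matrix.cons_val_three,
      Matrix.cons_val_four] at hP
    have h0 : ∀ m : Fin 5, (0:ℝ) ≤ t m := fun m => Nat.cast_nonneg _
    have hnat : 1 ≤ t 1 + t 2 + t 3 + t 4 := by
      fin_cases j
      · exact absurd rfl hj
      · have h : t 1 ≠ 0 := htj; omega
      · have h : t 2 ≠ 0 := htj; omega
      · have h : t 3 ≠ 0 := htj; omega
      · have h : t 4 ≠ 0 := htj; omega
    have hR : (1:ℝ) ≤ (t 1 : ℝ) + (t 2 : ℝ) + (t 3 : ℝ) + (t 4 : ℝ) := by exact_mod_cast hnat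
    linarith [h0 1, h0 2, h0 3, h0 4]
  · -- i = 1
    have key := halfspace ![0, 1, -2, 2] 0 (by
      intro s; fin_cases s <;> norm_num [toR, uEx, Fin.sum_univ_four, Matrix.cons_val_two, Matrix.cons_val_three, Matrix.vecHead,
        Matrix.vecTail])
    have hw := mem_dilT 1 2 t (by decide) (by decide) (by decide)
    have hP := key _ (hsub hw)
    rw [shift_eq] at hP
    have l0 : latLen uEx 1 0 = 5 := by decide
    have l1 : latLen uEx 1 1 = 0 := by decide
    have l2 : latLen uEx 1 2 = 60 := by decide
    have l3 : latLen uEx 1 3 = 4 := by decide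
    have l4 : latLen uEx 1 4 = 3 := by decide
    simp only [Fin.sum_univ_five, primVec] at hP
    rw [l0, l1, l2, l3, l4] at hP
    simp only [Fin.sum_univ_four, toR, uEx, Pi.add_apply, Pi.smul_apply, Pi.sub_apply,
      smul_eq_mul] at hP
    norm_num [Matrix.vecHead, Matrix.vecTail, Matrix.cons_val_two, Matrix.cons_val_three,
      Matrix.cons_val_four] at hP
    have h0 : ∀ m : Fin 5, (0:ℝ) ≤ t m := fun m => Nat.cast_nonneg _
    have hnat : 1 ≤ t 0 + t 2 + t 3 + t 4 := by
      fin_cases j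
      · have h : t 0 ≠ 0 := htj; omega
      · exact absurd rfl hj
      · have h : t 2 ≠ 0 := htj; omega
      · have h : t 3 ≠ 0 := htj; omega
      · have h : t 4 ≠ 0 := htj; omega
    have hR : (1:ℝ) ≤ (t 0 : ℝ) + (t 2 : ℝ) + (t 3 : ℝ) + (t 4 : ℝ) := by exact_mod_cast hnat
    linarith [h0 0, h0 2, h0 3, h0 4]
  · -- i = 2
    have key := halfspace ![-12, -1, 5, 0] 60 (by
      intro s; fin_cases s <;> norm_num [toR, uEx, Fin.sum_univ_four, Matrix.cons_val_two, Matrix.cons_val_three, Matrix.vecHead,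
        Matrix.vecTail])
    have hw := mem_dilT 2 1 t (by decide) (by decide) (by decide)
    have hP := key _ (hsub hw)
    rw [shift_eq] at hP
    have l0 : latLen uEx 2 0 = 5 := by decide
    have l1 : latLen uEx 2 1 = 60 := by decide
    have l2 : latLen uEx 2 2 = 0 := by decide
    have l3 : latLen uEx 2 3 = 4 := by decide
    have l4 : latLen uEx 2 4 = 3 := by decide
    simp only [Fin.sum_univ_five, primVec] at hP
    rw [l0, l1, l2, l3, l4] at hP
    simp only [Fin.sum_univ_four, toR, uEx, Pi.add_apply, Pi.smul_apply, Pi.sub_apply,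
      smul_eq_mul] at hP
    norm_num [Matrix.vecHead, Matrix.vecTail, Matrix.cons_val_two, Matrix.cons_val_three,
      Matrix.cons_val_four] at hP
    have h0 : ∀ m : Fin 5, (0:ℝ) ≤ t m := fun m => Nat.cast_nonneg _
    have hnat : 1 ≤ t 0 + t 1 + t 3 + t 4 := by
      fin_cases j
      · have h : t 0 ≠ 0 := htj; omega
      · have h : t 1 ≠ 0 := htj; omega
      · exact absurd rfl hj
      · have h : t 3 ≠ 0 := htj; omega
      · have h : t 4 ≠ 0 := htj; omega
    have hR : (1:ℝ) ≤ (t 0 : ℝ) + (t 1 : ℝ) + (t 3 : ℝ) + (t 4 : ℝ) := by exact_mod_cast hnat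
    linarith [h0 0, h0 1, h0 3, h0 4]
  · -- i = 3
    have key := halfspace ![0, 0, 5, -6] 0 (by
      intro s; fin_cases s <;> norm_num [toR, uEx, Fin.sum_univ_four, Matrix.cons_val_two, Matrix.cons_val_three, Matrix.vecHead,
        Matrix.vecTail])
    have hw := mem_dilT 3 0 t (by decide) (by decide) (by decide)
    have hP := key _ (hsub hw)
    rw [shift_eq] at hP
    have l0 : latLen uEx 3 0 = 3 := by decide
    have l1 : latLen uEx 3 1 = 4 := by decide
    have l2 : latLen uEx 3 2 = 4 := by decide
    have l3 : latLen uEx 3 3 = 0 := by decide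
    have l4 : latLen uEx 3 4 = 5 := by decide
    simp only [Fin.sum_univ_five, primVec] at hP
    rw [l0, l1, l2, l3, l4] at hP
    simp only [Fin.sum_univ_four, toR, uEx, Pi.add_apply, Pi.smul_apply, Pi.sub_apply,
      smul_eq_mul] at hP
    norm_num [Matrix.vecHead, Matrix.vecTail, Matrix.cons_val_two, Matrix.cons_val_three,
      Matrix.cons_val_four] at hP
    have h0 : ∀ m : Fin 5, (0:ℝ) ≤ t m := fun m => Nat.cast_nonneg _
    have hnat : 1 ≤ t 0 + t 1 + t 2 + t 4 := by
      fin_cases j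
      · have h : t 0 ≠ 0 := htj; omega
      · have h : t 1 ≠ 0 := htj; omega
      · have h : t 2 ≠ 0 := htj; omega
      · exact absurd rfl hj
      · have h : t 4 ≠ 0 := htj; omega
    have hR : (1:ℝ) ≤ (t 0 : ℝ) + (t 1 : ℝ) + (t 2 : ℝ) + (t 4 : ℝ) := by exact_mod_cast hnat
    linarith [h0 0, h0 1, h0 2, h0 4]
  · -- i = 4
    have key := halfspace ![0, 0, 0, 1] 0 (by
      intro s; fin_cases s <;> norm_num [toR, uEx, Fin.sum_univ_four, Matrix.cons_val_two, Matrix.cons_val_three, Matrix.vecHead,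
        Matrix.vecTail])
    have hw := mem_dilT 4 1 t (by decide) (by decide) (by decide)
    have hP := key _ (hsub hw)
    rw [shift_eq] at hP
    have l0 : latLen uEx 4 0 = 4 := by decide
    have l1 : latLen uEx 4 1 = 3 := by decide
    have l2 : latLen uEx 4 2 = 3 := by decide
    have l3 : latLen uEx 4 3 = 5 := by decide
    have l4 : latLen uEx 4 4 = 0 := by decide
    simp only [Fin.sum_univ_five, primVec] at hP
    rw [l0, l1, l2, l3, l4] at hP
    simp only [Fin.sum_univ_four, toR, uEx, Pi.add_apply, Pi.smul_apply, Pi.sub_apply,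
      smul_eq_mul] at hP
    norm_num [Matrix.vecHead, Matrix.vecTail, Matrix.cons_val_two, Matrix.cons_val_three,
      Matrix.cons_val_four] at hP
    have h0 : ∀ m : Fin 5, (0:ℝ) ≤ t m := fun m => Nat.cast_nonneg _
    have hnat : 1 ≤ t 0 + t 1 + t 2 + t 3 := by
      fin_cases j
      · have h : t 0 ≠ 0 := htj; omega
      · have h : t 1 ≠ 0 := htj; omega
      · have h : t 2 ≠ 0 := htj; omega
      · have h : t 3 ≠ 0 := htj; omega
      · exact absurd rfl hj
    have hR : (1:ℝ) ≤ (t 0 : ℝ) + (t 1 : ℝ) + (t 2 : ℝ) + (t 3 : ℝ) := by exact_mod_cast hnat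
    linarith [h0 0, h0 1, h0 2, h0 3]
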